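/- Let T be a compactly generated tensor triangulated category and (X,σ) a support on T satisfying axioms (S0) σ(0)=∅, (S2)–(S5) (σ(A⊕B)=σ(A)∪σ(B), σ(TA)=σ(A), σ(B)⊆σ(A)∪σ(C) for triangles, σ(A⊗B)=σ(A)∩σ(B) for A compact) and (S6) σ(∐ᵢAᵢ)=⋃ᵢσ(Aᵢ). For a subset Y ⊆ X set C_Y := {A ∈ T_c : σ(A) ⊆ Y} and T_Y := ⟨C_Y⟩_loc. Then: (a) C_Y is a radical thick ⊗-ideal of T_c, hence C_Y = (T_Y)_c; and (b) every A ∈ T_Y satisfies σ(A) ⊆ Y. -/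

import Mathlib

/-!
Statement 7 (Central localization of a compactly generated tensor triangulated category),
Theorem 2.33 of the paper.
-/

open CategoryTheory Limits Pretriangulated Opposite MonoidalCategory

universe v u

namespace Stmt10

variable {C : Type u} [Category.{v} C] [Preadditive C] [HasZeroObject C]
  [HasShift C ℤ] [∀ n : ℤ, (shiftFunctor C n).Additive] [Pretriangulated C]
  [MonoidalCategory C] [SymmetricCategory C] [HasCoproducts.{v} C] [HasBinaryBiproducts C]

/-- An object `A` is compact if `Hom(A, -)` preserves small coproducts. -/
def IsCompactObj (A : C) : Prop :=
  ∀ ι : Type v, Nonempty (PreservesColimitsOfShape (Discrete ι)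
    (preadditiveCoyoneda.obj (op A)))

/-- The action of the central ring `R_T = End(𝟙)` on morphisms: `r · f := r ⊗ f`
(via the structural unitor identifications). -/
def cmul (r : End (𝟙_ C)) {A B : C} (f : A ⟶ B) : A ⟶ B :=
  (λ_ A).inv ≫ ((r : 𝟙_ C ⟶ 𝟙_ C) ⊗ₘ f) ≫ (λ_ B).hom

/-- A localizing subcategory, described by its class of objects. -/
structure IsLocalizing (S : Set C) : Prop where
  zero : ∀ A : C, IsZero A → A ∈ S
  iso : ∀ ⦃A B : C⦄, (A ≅ B) → A ∈ S → B ∈ S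
  shift : ∀ A ∈ S, A⟦(1 : ℤ)⟧ ∈ S
  unshift : ∀ A ∈ S, A⟦(-1 : ℤ)⟧ ∈ S
  tri : ∀ T ∈ distTriang C, T.obj₁ ∈ S → T.obj₂ ∈ S → T.obj₃ ∈ S
  coprod : ∀ (ι : Type v) (f : ι → C), (∀ i, f i ∈ S) → (∐ f) ∈ S

/-- The localizing subcategory generated by a class of objects. -/
def locGen (E : Set C) : Set C := ⋂₀ {S : Set C | IsLocalizing S ∧ E ⊆ S}

/-- A thick `⊗`-ideal `J` of a tensor subcategory with class of objects `K`. -/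
structure IsThickIdealOn (K J : Set C) : Prop where
  subset : J ⊆ K
  zero : ∀ A : C, IsZero A → A ∈ K → A ∈ J
  iso : ∀ ⦃A B : C⦄, (A ≅ B) → A ∈ J → B ∈ J
  shift : ∀ A ∈ J, A⟦(1 : ℤ)⟧ ∈ J
  unshift : ∀ A ∈ J, A⟦(-1 : ℤ)⟧ ∈ J
  tri : ∀ T ∈ distTriang C, T.obj₁ ∈ J → T.obj₂ ∈ J → T.obj₃ ∈ K → T.obj₃ ∈ J
  smd : ∀ A B : C, (A ⊞ B) ∈ J → A ∈ K → A ∈ J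
  tensor : ∀ A ∈ J, ∀ B ∈ K, (A ⊗ B) ∈ J

/-- The thick `⊗`-ideal of `K` generated by a class of objects. -/
def thickIdealGen (K E : Set C) : Set C := ⋂₀ {J : Set C | IsThickIdealOn K J ∧ E ⊆ J}

/-- The right orthogonal `E^⊥`. -/
def rightOrth (E : Set C) : Set C := {A : C | ∀ B ∈ E, ∀ f : B ⟶ A, f = 0}

/-- Cones of the morphisms `s : 𝟙 ⟶ 𝟙`, `s ∈ S`. -/
def conesOf (S : Set (End (𝟙_ C))) : Set C :=
  {Z : C | ∃ s ∈ S, ∃ (g : 𝟙_ C ⟶ Z) (h : Z ⟶ (𝟙_ C)⟦(1 : ℤ)⟧),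
    Triangle.mk (s : 𝟙_ C ⟶ 𝟙_ C) g h ∈ distTriang C}

/-- Complementary pair of subcategories. -/
structure IsComplementary (L R : Set C) : Prop where
  orth : ∀ A ∈ L, ∀ B ∈ R, ∀ f : A ⟶ B, f = 0
  glue : ∀ A : C, ∃ (A' A'' : C) (f : A' ⟶ A) (g : A ⟶ A'') (h : A'' ⟶ A'⟦(1 : ℤ)⟧),
    (Triangle.mk f g h ∈ distTriang C) ∧ A' ∈ L ∧ A'' ∈ R

/-- Tensor powers `A^{⊗n}` (with `A^{⊗0} = 𝟙`). -/
def tpow (A : C) : ℕ → C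
  | 0 => 𝟙_ C
  | n + 1 => tpow A n ⊗ A

noncomputable def shiftHomAddEquiv (A : C) (n : ℤ) (X : C) :
    (A⟦n⟧ ⟶ X) ≃+ (A ⟶ X⟦(-n : ℤ)⟧) :=
  AddEquiv.mk' ((shiftEquiv C n).toAdjunction.homEquiv A X) (by
    intro f g
    exact (by
      intro f g
      simp [Adjunction.homEquiv_unit, Preadditive.comp_add]
      rw [← Preadditive.comp_add]
      exact congrArg _ (Functor.map_add (shiftFunctor C (-n))) :
      ∀ f g : (shiftEquiv C n).functor.obj A ⟶ X,
        (shiftEquiv C n).toAdjunction.homEquiv A X (f + g) =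
          (shiftEquiv C n).toAdjunction.homEquiv A X f +
            (shiftEquiv C n).toAdjunction.homEquiv A X g) f g)

noncomputable def shiftCoyonedaNatIso (A : C) (n : ℤ) :
    shiftFunctor C (-n) ⋙ preadditiveCoyoneda.obj (op A) ≅
      preadditiveCoyoneda.obj (op (A⟦n⟧)) :=
  NatIso.ofComponents
    (fun X => ((shiftHomAddEquiv A n X).symm).toAddCommGrpIso)
    (by
      intro X X' h
      ext g
      exact Adjunction.homEquiv_naturality_right_symm _ g h)

theorem isCompactObj_of_iso {A B : C} (e : A ≅ B) (h : IsCompactObj A) :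
    IsCompactObj B := by
  intro ι
  have := (h ι).some
  exact ⟨preservesColimitsOfShape_of_natIso (preadditiveCoyoneda.mapIso e.symm.op)⟩

theorem isCompactObj_shift {A : C} (h : IsCompactObj A) (n : ℤ) :
    IsCompactObj (A⟦n⟧) := by
  intro ι
  have := (h ι).some
  exact ⟨preservesColimitsOfShape_of_natIso (shiftCoyonedaNatIso A n)⟩

/-- Lemma 3.4.  Let `(X, σ)` be a support on `T` satisfying axioms
(S0), (S2)–(S5) and (S6).  For `Y ⊆ X` put `C_Y := {A ∈ T_c : σ(A) ⊆ Y}` and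
`T_Y := ⟨C_Y⟩_loc`.  Then (a) `C_Y` is a radical thick `⊗`-ideal of `T_c`, hence
`C_Y = (T_Y)_c`, and (b) every `A ∈ T_Y` satisfies `σ(A) ⊆ Y`. -/
theorem support_CY_TY
    [∀ (A : C) (ι : Type v), PreservesColimitsOfShape (Discrete ι) (tensorLeft A)]
    [∀ (A : C) (ι : Type v), PreservesColimitsOfShape (Discrete ι) (tensorRight A)]
    [∀ A : C, (tensorLeft A).CommShift ℤ] [∀ A : C, (tensorLeft A).IsTriangulated]
    [∀ A : C, (tensorRight A).CommShift ℤ] [∀ A : C, (tensorRight A).IsTriangulated]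
    (hunit : IsCompactObj (𝟙_ C))
    (htc : ∀ A B : C, IsCompactObj A → IsCompactObj B → IsCompactObj (A ⊗ B))
    (dual : C → C)
    (hdualc : ∀ A : C, IsCompactObj A → IsCompactObj (dual A))
    (hdualadj : ∀ A : C, IsCompactObj A → ∀ X Y : C,
      Nonempty ((X ⊗ A ⟶ Y) ≃ (X ⟶ Y ⊗ dual A)))
    (hgen : locGen {A : C | IsCompactObj A} = Set.univ)
    -- a support `(X, σ)` on `T`
    {X : Type*} (σ : C → Set X)
    -- (S0)
    (hS0 : ∀ A : C, IsZero A → σ A = ∅)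
    -- (S2)
    (hS2 : ∀ A B : C, σ (A ⊞ B) = σ A ∪ σ B)
    -- (S3)
    (hS3 : ∀ A : C, σ (A⟦(1 : ℤ)⟧) = σ A)
    (hS3' : ∀ A : C, σ (A⟦(-1 : ℤ)⟧) = σ A)
    -- (S4)
    (hS4 : ∀ T ∈ distTriang C, σ T.obj₂ ⊆ σ T.obj₁ ∪ σ T.obj₃)
    -- (S5), for `A` compact and `B` arbitrary
    (hS5 : ∀ A B : C, IsCompactObj A → σ (A ⊗ B) = σ A ∩ σ B)
    -- (S6)
    (hS6 : ∀ (ι : Type v) (f : ι → C), σ (∐ f) = ⋃ i, σ (f i))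
    -- σ is invariant under isomorphism
    (hiso : ∀ ⦃A B : C⦄, (A ≅ B) → σ A = σ B)
    (Y : Set X) :
    -- (a) `C_Y` is a radical thick `⊗`-ideal of `T_c` …
    IsThickIdealOn {A : C | IsCompactObj A} {A : C | IsCompactObj A ∧ σ A ⊆ Y} ∧
    (∀ A : C, IsCompactObj A → ∀ n : ℕ,
      (IsCompactObj (tpow A n) ∧ σ (tpow A n) ⊆ Y) → 1 ≤ n → (IsCompactObj A ∧ σ A ⊆ Y)) ∧
    -- … hence `C_Y = (T_Y)_c`
    {A : C | IsCompactObj A ∧ σ A ⊆ Y} =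
      locGen {A : C | IsCompactObj A ∧ σ A ⊆ Y} ∩ {A : C | IsCompactObj A} ∧
    -- (b) every `A ∈ T_Y` satisfies `σ(A) ⊆ Y`
    (∀ A ∈ locGen {A : C | IsCompactObj A ∧ σ A ⊆ Y}, σ A ⊆ Y) := by
  classical
  -- the full subcategory of objects supported in `Y` is localizing
  have hSY : IsLocalizing {A : C | σ A ⊆ Y} :=
    { zero := fun A hA => by
        simp only [Set.mem_setOf_eq, hS0 A hA]
        exact Set.empty_subset Y
      iso := fun A B e hA => by
        simp only [Set.mem_setOf_eq, ← hiso e]; exact hA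
      shift := fun A hA => by simp only [Set.mem_setOf_eq, hS3]; exact hA
      unshift := fun A hA => by simp only [Set.mem_setOf_eq, hS3']; exact hA
      tri := fun T hT h1 h2 => by
        have h4 := hS4 T.rotate (rot_of_distTriang T hT)
        simp only [Triangle.rotate_obj₁, Triangle.rotate_obj₂,
          Triangle.rotate_obj₃, hS3] at h4
        exact h4.trans (Set.union_subset h2 h1)
      coprod := fun ι f hf => by
        simp only [Set.mem_setOf_eq, hS6]
        exact Set.iUnion_subset hf }
  -- part (b)
  have hb : ∀ A ∈ locGen {A : C | IsCompactObj A ∧ σ A ⊆ Y}, σ A ⊆ Y := by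
    intro A hA
    exact hA {B | σ B ⊆ Y} ⟨hSY, fun B hB => hB.2⟩
  -- σ A ∩ σ 𝟙 = σ A for compact A
  have hself : ∀ A : C, IsCompactObj A → σ A ∩ σ (𝟙_ C) = σ A := by
    intro A hA
    exact (hS5 A (𝟙_ C) hA).symm.trans (hiso (ρ_ A))
  -- (a) thick tensor ideal
  have hti : IsThickIdealOn {A : C | IsCompactObj A}
      {A : C | IsCompactObj A ∧ σ A ⊆ Y} :=
    { subset := fun A hA => hA.1
      zero := fun A hz hc => ⟨hc, by rw [hS0 A hz]; exact Set.empty_subset Y⟩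
      iso := fun A B e hA => ⟨isCompactObj_of_iso e hA.1, by
        rw [← hiso e]; exact hA.2⟩
      shift := fun A hA => ⟨isCompactObj_shift hA.1 1, by rw [hS3]; exact hA.2⟩
      unshift := fun A hA => ⟨isCompactObj_shift hA.1 (-1), by rw [hS3']; exact hA.2⟩
      tri := fun T hT h1 h2 h3 => ⟨h3, by
        have h4 := hS4 T.rotate (rot_of_distTriang T hT)
        simp only [Triangle.rotate_obj₁, Triangle.rotate_obj₂,
          Triangle.rotate_obj₃, hS3] at h4
        exact h4.trans (Set.union_subset h2.2 h1.2)⟩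
      smd := fun A B hAB hA => ⟨hA, by
        have h2 := hAB.2
        rw [hS2] at h2
        exact Set.subset_union_left.trans h2⟩
      tensor := fun A hA B hB => ⟨htc A B hA.1 hB, by
        rw [hS5 A B hA.1]
        exact Set.inter_subset_left.trans hA.2⟩ }
  -- radicality
  have hrad : ∀ A : C, IsCompactObj A → ∀ n : ℕ,
      (IsCompactObj (tpow A n) ∧ σ (tpow A n) ⊆ Y) → 1 ≤ n →
      (IsCompactObj A ∧ σ A ⊆ Y) := by
    intro A hA n hn h1
    refine ⟨hA, ?_⟩
    have hcomp : ∀ m : ℕ, IsCompactObj (tpow A m) := by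
      intro m
      induction m with
      | zero => exact hunit
      | succ m ih => exact htc _ _ ih hA
    have hsig : ∀ m : ℕ, 1 ≤ m → σ (tpow A m) = σ A := by
      intro m hm
      induction m with
      | zero => omega
      | succ m ih =>
        rcases Nat.eq_zero_or_pos m with h0 | hpos
        · subst h0
          show σ (tpow A 0 ⊗ A) = σ A
          rw [show (tpow A 0 : C) = 𝟙_ C from rfl, hS5 _ A hunit, Set.inter_comm]
          exact hself A hA
        · show σ (tpow A m ⊗ A) = σ A
          rw [hS5 _ A (hcomp m), ih hpos, Set.inter_self]
    rw [← hsig n h1]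
    exact hn.2
  -- C_Y = (T_Y)_c
  have hc : {A : C | IsCompactObj A ∧ σ A ⊆ Y} =
      locGen {A : C | IsCompactObj A ∧ σ A ⊆ Y} ∩ {A : C | IsCompactObj A} := by
    ext A
    constructor
    · intro hA
      exact ⟨fun S hS => hS.2 hA, hA.1⟩
    · intro hA
      exact ⟨hA.2, hb A hA.1⟩
  exact ⟨hti, hrad, hc, hb⟩


end Stmt10
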